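/- For every n ≥ 1, Σ_{k=1}^{n+1} (k−1)! · T(n+1, k) equals (2^n − 1) · T_n if n is odd and 2^n · S_n if n is even, where T_n and S_n are the tangent and secant numbers. -/

import Mathlib

open Real Finset

/-- Tangent numbers: tan t = Σ Tₙ tⁿ/n!. -/
noncomputable def tangentNumber (n : ℕ) : ℝ := iteratedDeriv n Real.tan 0

/-- Secant numbers: sec t = Σ Sₙ tⁿ/n!. -/
noncomputable def secantNumber (n : ℕ) : ℝ := iteratedDeriv n (fun t : ℝ => 1 / Real.cos t) 0

/-- Higher-order tangent numbers: tanᵏ t / k! = Σ T(n,k) tⁿ/n!. -/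
noncomputable def T (n k : ℕ) : ℝ :=
  iteratedDeriv n (fun t : ℝ => Real.tan t ^ k) 0 / (Nat.factorial k : ℝ)

/-- Higher-order secant numbers: sec t · tanᵏ t / k! = Σ S(n,k) tⁿ/n!. -/
noncomputable def S (n k : ℕ) : ℝ :=
  iteratedDeriv n (fun t : ℝ => Real.tan t ^ k / Real.cos t) 0 / (Nat.factorial k : ℝ)

/-- Higher-order arctangent numbers: arctanᵏ t / k! = Σ T*(n,k) tⁿ/n!. -/
noncomputable def Tstar (n k : ℕ) : ℝ :=
  iteratedDeriv n (fun t : ℝ => Real.arctan t ^ k) 0 / (Nat.factorial k : ℝ)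

/-- Binomial coefficient with integer lower index (0 if lower index is negative). -/
noncomputable def chooseZ (a : ℕ) (b : ℤ) : ℝ :=
  if 0 ≤ b then (a.choose b.toNat : ℝ) else 0

section helpers
open Set Topology

private lemma iterDeriv_eq_within {f : ℝ → ℝ} {s : Set ℝ} (hs : IsOpen s) {x : ℝ} (hx : x ∈ s) (n : ℕ) :
    iteratedDeriv n f x = iteratedDerivWithin n f s x := by
  rw [iteratedDeriv, iteratedDerivWithin, iteratedFDerivWithin_of_isOpen n hs hx]

private lemma iter_add {s : Set ℝ} (hs : IsOpen s) (h0 : (0:ℝ) ∈ s) {f g : ℝ → ℝ} (n : ℕ)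
    (hf : ContDiffOn ℝ (⊤:ℕ∞) f s) (hg : ContDiffOn ℝ (⊤:ℕ∞) g s) :
    iteratedDeriv n (fun t => f t + g t) 0 = iteratedDeriv n f 0 + iteratedDeriv n g 0 := by
  rw [iterDeriv_eq_within hs h0, iterDeriv_eq_within hs h0, iterDeriv_eq_within hs h0]
  exact iteratedDerivWithin_add h0 hs.uniqueDiffOn ((hf 0 h0).of_le (by exact_mod_cast le_top))
    ((hg 0 h0).of_le (by exact_mod_cast le_top))

private lemma iter_sub {s : Set ℝ} (hs : IsOpen s) (h0 : (0:ℝ) ∈ s) {f g : ℝ → ℝ} (n : ℕ)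
    (hf : ContDiffOn ℝ (⊤:ℕ∞) f s) (hg : ContDiffOn ℝ (⊤:ℕ∞) g s) :
    iteratedDeriv n (fun t => f t - g t) 0 = iteratedDeriv n f 0 - iteratedDeriv n g 0 := by
  rw [iterDeriv_eq_within hs h0, iterDeriv_eq_within hs h0, iterDeriv_eq_within hs h0]
  exact iteratedDerivWithin_sub h0 hs.uniqueDiffOn ((hf 0 h0).of_le (by exact_mod_cast le_top))
    ((hg 0 h0).of_le (by exact_mod_cast le_top))

private lemma iter_const_mul {s : Set ℝ} (hs : IsOpen s) (h0 : (0:ℝ) ∈ s) {f : ℝ → ℝ} (c : ℝ) (n : ℕ)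
    (hf : ContDiffOn ℝ (⊤:ℕ∞) f s) :
    iteratedDeriv n (fun t => c * f t) 0 = c * iteratedDeriv n f 0 := by
  rw [iterDeriv_eq_within hs h0, iterDeriv_eq_within hs h0]
  exact iteratedDerivWithin_const_mul h0 hs.uniqueDiffOn c ((hf 0 h0).of_le (by exact_mod_cast le_top))

private lemma iter_zero_fun (n : ℕ) : iteratedDeriv n (fun _ : ℝ => (0:ℝ)) 0 = 0 := by
  induction n with
  | zero => simp
  | succ n ih => rw [iteratedDeriv_succ']; simp only [deriv_const']; exact ih

private lemma iter_sum {s : Set ℝ} (hs : IsOpen s) (h0 : (0:ℝ) ∈ s) {ι : Type*} (A : Finset ι)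
    (f : ι → ℝ → ℝ) (hf : ∀ i ∈ A, ContDiffOn ℝ (⊤:ℕ∞) (f i) s) (n : ℕ) :
    iteratedDeriv n (fun t => ∑ i ∈ A, f i t) 0 = ∑ i ∈ A, iteratedDeriv n (f i) 0 := by
  classical
  induction A using Finset.cons_induction with
  | empty => simpa using iter_zero_fun n
  | cons a A ha ih =>
    simp only [Finset.sum_cons]
    rw [iter_add hs h0 n (hf a (Finset.mem_cons_self a A))
      (ContDiffOn.sum fun i hi => hf i (Finset.mem_cons_of_mem hi)),
      ih (fun i hi => hf i (Finset.mem_cons_of_mem hi))]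

private lemma iter_comp_two {u : Set ℝ} (hu : IsOpen u) (h0 : (0:ℝ) ∈ u) :
    ∀ (n : ℕ) (f : ℝ → ℝ), ContDiffOn ℝ (⊤:ℕ∞) f u →
    iteratedDeriv n (fun x => f (2 * x)) 0 = 2 ^ n * iteratedDeriv n f 0 := by
  intro n
  induction n with
  | zero => intro f hf; simp
  | succ n ih =>
    intro f hf
    have hso : IsOpen ((fun x : ℝ => 2 * x) ⁻¹' u) := hu.preimage (by fun_prop)
    have hs0 : (0:ℝ) ∈ (fun x : ℝ => 2 * x) ⁻¹' u := by simpa using h0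
    have hdf : ContDiffOn ℝ (⊤:ℕ∞) (deriv f) u := hf.deriv_of_isOpen hu (by exact_mod_cast le_top)
    have hev : deriv (fun y => f (2*y)) =ᶠ[nhds (0:ℝ)] fun x => 2 * deriv f (2*x) := by
      filter_upwards [hso.mem_nhds hs0] with x hx
      have hfd : HasDerivAt f (deriv f (2*x)) (2*x) :=
        ((hf.contDiffAt (hu.mem_nhds hx)).differentiableAt (by simp)).hasDerivAt
      have hlin : HasDerivAt (fun y : ℝ => 2 * y) 2 x := by
        simpa using (hasDerivAt_id x).const_mul (2:ℝ)
      have h2 : HasDerivAt (fun y : ℝ => f (2*y)) (deriv f (2*x) * 2) x :=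
        hfd.comp x hlin
      rw [h2.deriv]; ring
    rw [iteratedDeriv_succ', hev.iteratedDeriv_eq n,
      show (fun x => 2 * deriv f (2*x)) = (fun x => (fun y => 2 * deriv f y) (2 * x)) from rfl,
      ih _ (contDiffOn_const.mul hdf), iter_const_mul hu h0 2 n hdf, iteratedDeriv_succ']
    ring

private lemma deriv_mul_ev {s : Set ℝ} (hs : IsOpen s) (h0 : (0:ℝ) ∈ s) {u g : ℝ → ℝ}
    (hu : ContDiffOn ℝ (⊤:ℕ∞) u s) (hg : ContDiffOn ℝ (⊤:ℕ∞) g s) :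
    deriv (fun t => u t * g t) =ᶠ[nhds (0:ℝ)] fun t => deriv u t * g t + u t * deriv g t := by
  filter_upwards [hs.mem_nhds h0] with x hx
  exact deriv_fun_mul ((hu.contDiffAt (hs.mem_nhds hx)).differentiableAt (by simp))
    ((hg.contDiffAt (hs.mem_nhds hx)).differentiableAt (by simp))

private lemma vanish_mul {s : Set ℝ} (hs : IsOpen s) (h0 : (0:ℝ) ∈ s) :
    ∀ m : ℕ, ∀ u g : ℝ → ℝ, ContDiffOn ℝ (⊤:ℕ∞) u s → ContDiffOn ℝ (⊤:ℕ∞) g s →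
    (∀ j ≤ m, iteratedDeriv j g 0 = 0) → ∀ j ≤ m, iteratedDeriv j (fun t => u t * g t) 0 = 0 := by
  intro m
  induction m with
  | zero =>
    intro u g hu hg hv j hj
    interval_cases j
    have hg0 : g 0 = 0 := by simpa using hv 0 le_rfl
    simp only [iteratedDeriv_zero]
    rw [hg0, mul_zero]
  | succ m ih =>
    intro u g hu hg hv j hj
    rcases j with _ | i
    · have hg0 : g 0 = 0 := by simpa using hv 0 (Nat.zero_le _)
      simp only [iteratedDeriv_zero]
      rw [hg0, mul_zero]
    · have hi : i ≤ m := Nat.succ_le_succ_iff.mp hj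
      rw [iteratedDeriv_succ', (deriv_mul_ev hs h0 hu hg).iteratedDeriv_eq]
      have hdu : ContDiffOn ℝ (⊤:ℕ∞) (deriv u) s := hu.deriv_of_isOpen hs (by exact_mod_cast le_top)
      have hdg : ContDiffOn ℝ (⊤:ℕ∞) (deriv g) s := hg.deriv_of_isOpen hs (by exact_mod_cast le_top)
      rw [iter_add hs h0 _ (hdu.mul hg) (hu.mul hdg)]
      rw [ih (deriv u) g hdu hg (fun i' hi' => hv i' (hi'.trans (Nat.le_succ m))) _ hi,
        ih u (deriv g) hu hdg (fun i' hi' => by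
          rw [← iteratedDeriv_succ']; exact hv (i'+1) (Nat.succ_le_succ hi')) _ hi]
      simp

private lemma vanish_mul' {s : Set ℝ} (hs : IsOpen s) (h0 : (0:ℝ) ∈ s) :
    ∀ m : ℕ, ∀ u g : ℝ → ℝ, ContDiffOn ℝ (⊤:ℕ∞) u s → ContDiffOn ℝ (⊤:ℕ∞) g s → u 0 = 0 →
    (∀ j ≤ m, iteratedDeriv j g 0 = 0) → ∀ j ≤ m + 1, iteratedDeriv j (fun t => u t * g t) 0 = 0 := by
  intro m
  induction m with
  | zero =>
    intro u g hu hg hu0 hv j hj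
    interval_cases j
    · simp only [iteratedDeriv_zero]
      rw [hu0, zero_mul]
    · have hg0 : g 0 = 0 := by simpa using hv 0 le_rfl
      rw [iteratedDeriv_succ', (deriv_mul_ev hs h0 hu hg).iteratedDeriv_eq]
      simp only [iteratedDeriv_zero]
      rw [hg0, hu0, mul_zero, zero_mul, add_zero]
  | succ m ih =>
    intro u g hu hg hu0 hv j hj
    rcases j with _ | i
    · simp only [iteratedDeriv_zero]
      rw [hu0, zero_mul]
    · have hi : i ≤ m + 1 := Nat.succ_le_succ_iff.mp hj
      rw [iteratedDeriv_succ', (deriv_mul_ev hs h0 hu hg).iteratedDeriv_eq]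
      have hdu : ContDiffOn ℝ (⊤:ℕ∞) (deriv u) s := hu.deriv_of_isOpen hs (by exact_mod_cast le_top)
      have hdg : ContDiffOn ℝ (⊤:ℕ∞) (deriv g) s := hg.deriv_of_isOpen hs (by exact_mod_cast le_top)
      rw [iter_add hs h0 _ (hdu.mul hg) (hu.mul hdg)]
      rw [vanish_mul hs h0 (m+1) (deriv u) g hdu hg hv _ hi,
        ih u (deriv g) hu hdg hu0 (fun i' hi' => by
          rw [← iteratedDeriv_succ']; exact hv (i'+1) (Nat.succ_le_succ hi')) _ hi]
      simp

private lemma vanish_tan_pow {s : Set ℝ} (hs : IsOpen s) (h0 : (0:ℝ) ∈ s)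
    (htan : ContDiffOn ℝ (⊤:ℕ∞) Real.tan s) :
    ∀ m : ℕ, ∀ j ≤ m, iteratedDeriv j (fun t => Real.tan t ^ (m+1)) 0 = 0 := by
  intro m
  induction m with
  | zero =>
    intro j hj; interval_cases j; simp [iteratedDeriv_zero]
  | succ m ih =>
    intro j hj
    have := vanish_mul' hs h0 m Real.tan (fun t => Real.tan t ^ (m+1)) htan (htan.pow (m+1))
      (by simp) ih j hj
    simpa [← pow_succ'] using this

private lemma odd_deriv_even (f : ℝ → ℝ) (hf : ∀ x, f (-x) = f x) {n : ℕ} (hn : Odd n) :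
    iteratedDeriv n f 0 = 0 := by
  have h := iteratedDeriv_comp_neg n f 0
  rw [neg_zero, show (fun x : ℝ => f (-x)) = f from funext hf, hn.neg_one_pow] at h
  have : iteratedDeriv n f 0 = -iteratedDeriv n f 0 := by
    simpa [smul_eq_mul] using h
  linarith

private lemma even_deriv_odd (f : ℝ → ℝ) (hf : ∀ x, f (-x) = -f x) {n : ℕ} (hn : Even n) :
    iteratedDeriv n f 0 = 0 := by
  have h := iteratedDeriv_comp_neg n f 0
  rw [neg_zero, show (fun x : ℝ => f (-x)) = fun x => -(f x) from funext hf,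
    iteratedDeriv_fun_neg, hn.neg_one_pow] at h
  have : -iteratedDeriv n f 0 = iteratedDeriv n f 0 := by
    simpa [smul_eq_mul] using h
  linarith

private lemma keyid {t : ℝ} (h1 : Real.cos t ≠ 0) (h2 : Real.cos (2*t) ≠ 0) :
    (1 / Real.cos (2*t) + Real.tan (2*t) - Real.tan t) * (1 - Real.tan t) = 1 / Real.cos t ^ 2 := by
  rw [Real.tan_eq_sin_div_cos (2*t), Real.tan_eq_sin_div_cos t, Real.sin_two_mul]
  have h2' : Real.cos t ^ 2 - Real.sin t ^ 2 ≠ 0 := by rwa [Real.cos_two_mul'] at h2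
  rw [Real.cos_two_mul']
  field_simp
  linear_combination (Real.cos t - Real.sin t) * Real.sin t * Real.sin_sq_add_cos_sq t

end helpers

theorem stmt10 (n : ℕ) (hn : 1 ≤ n) :
    ∑ k ∈ Finset.Icc 1 (n + 1), ((k - 1).factorial : ℝ) * T (n + 1) k =
      if Odd n then ((2 : ℝ) ^ n - 1) * tangentNumber n
      else (2 : ℝ) ^ n * secantNumber n := by
  classical
  have hpi := Real.pi_pos
  set s : Set ℝ := Set.Ioo (-(π/8)) (π/8) with hs_def
  have hso : IsOpen s := isOpen_Ioo
  have h0 : (0:ℝ) ∈ s := by constructor <;> simp <;> linarith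
  have hcos : ∀ x ∈ s, Real.cos x ≠ 0 := by
    intro x hx
    obtain ⟨hx1, hx2⟩ := hx
    exact (Real.cos_pos_of_mem_Ioo ⟨by linarith, by linarith⟩).ne'
  have hcos2 : ∀ x ∈ s, Real.cos (2*x) ≠ 0 := by
    intro x hx
    obtain ⟨hx1, hx2⟩ := hx
    exact (Real.cos_pos_of_mem_Ioo ⟨by linarith, by linarith⟩).ne'
  have htan : ContDiffOn ℝ (⊤:ℕ∞) Real.tan s :=
    fun x hx => (Real.contDiffAt_tan.2 (hcos x hx)).contDiffWithinAt
  set u : Set ℝ := Set.Ioo (-(π/4)) (π/4) with hu_def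
  have huo : IsOpen u := isOpen_Ioo
  have hu0 : (0:ℝ) ∈ u := by constructor <;> simp <;> linarith
  have hcosu : ∀ x ∈ u, Real.cos x ≠ 0 := by
    intro x hx
    obtain ⟨hx1, hx2⟩ := hx
    exact (Real.cos_pos_of_mem_Ioo ⟨by linarith, by linarith⟩).ne'
  have htanu : ContDiffOn ℝ (⊤:ℕ∞) Real.tan u :=
    fun x hx => (Real.contDiffAt_tan.2 (hcosu x hx)).contDiffWithinAt
  have hsecu : ContDiffOn ℝ (⊤:ℕ∞) (fun t => 1 / Real.cos t) u :=
    contDiffOn_const.div Real.contDiff_cos.contDiffOn hcosu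
  have h2mem : ∀ x ∈ s, 2*x ∈ u := by
    intro x hx
    obtain ⟨hx1, hx2⟩ := hx
    exact ⟨by linarith, by linarith⟩
  have hlin : ContDiff ℝ (⊤:ℕ∞) (fun x : ℝ => 2 * x) := contDiff_const.mul contDiff_id
  have hsec2 : ContDiffOn ℝ (⊤:ℕ∞) (fun t => 1 / Real.cos (2*t)) s := by
    intro x hx
    exact ((hsecu.contDiffAt (huo.mem_nhds (h2mem x hx))).comp x hlin.contDiffAt).contDiffWithinAt
  have htan2 : ContDiffOn ℝ (⊤:ℕ∞) (fun t => Real.tan (2*t)) s := by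
    intro x hx
    exact ((htanu.contDiffAt (huo.mem_nhds (h2mem x hx))).comp x hlin.contDiffAt).contDiffWithinAt
  have hF : ContDiffOn ℝ (⊤:ℕ∞) (fun t => 1 / Real.cos (2*t) + Real.tan (2*t) - Real.tan t) s :=
    (hsec2.add htan2).sub htan
  -- Step A : rewrite each summand
  have hfact : ∀ k ∈ Finset.Icc 1 (n+1), ((k - 1).factorial : ℝ) * T (n + 1) k =
      (1/(k:ℝ)) * iteratedDeriv (n+1) (fun t => Real.tan t ^ k) 0 := by
    intro k hk
    obtain ⟨hk1, _⟩ := Finset.mem_Icc.mp hk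
    obtain ⟨j, rfl⟩ : ∃ j, k = j + 1 := ⟨k - 1, (Nat.succ_pred_eq_of_pos hk1).symm⟩
    rw [T, Nat.factorial_succ, Nat.add_sub_cancel]
    have hj1 : ((j:ℝ) + 1) ≠ 0 := by positivity
    have hjf : ((j.factorial : ℝ)) ≠ 0 := Nat.cast_ne_zero.mpr j.factorial_ne_zero
    push_cast
    field_simp
  rw [Finset.sum_congr rfl hfact]
  -- Step B : pull out the sum
  have hB : (∑ k ∈ Finset.Icc 1 (n+1), (1/(k:ℝ)) * iteratedDeriv (n+1) (fun t => Real.tan t ^ k) 0)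
      = iteratedDeriv (n+1) (fun t => ∑ k ∈ Finset.Icc 1 (n+1), (1/(k:ℝ)) * Real.tan t ^ k) 0 := by
    rw [iter_sum hso h0 _ _ (fun k _ => contDiffOn_const.mul (htan.pow k))]
    exact Finset.sum_congr rfl fun k _ => (iter_const_mul hso h0 _ _ (htan.pow k)).symm
  rw [hB]
  set G : ℝ → ℝ := fun t => ∑ k ∈ Finset.Icc 1 (n+1), (1/(k:ℝ)) * Real.tan t ^ k with hG_def
  -- Step C : derivative of G on s
  have hderivG : ∀ x ∈ s, deriv G x =
      (1 / Real.cos x ^ 2) * ∑ j ∈ Finset.range (n+1), Real.tan x ^ j := by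
    intro x hx
    have hhd : HasDerivAt G (∑ k ∈ Finset.Icc 1 (n+1),
        (1/(k:ℝ)) * ((k:ℝ) * Real.tan x ^ (k-1) * (1/Real.cos x ^ 2))) x :=
      HasDerivAt.fun_sum fun k _ => ((Real.hasDerivAt_tan (hcos x hx)).pow k).const_mul _
    rw [hhd.deriv]
    have hsimp : ∀ k ∈ Finset.Icc 1 (n+1),
        (1/(k:ℝ)) * ((k:ℝ) * Real.tan x ^ (k-1) * (1/Real.cos x ^ 2))
        = Real.tan x ^ (k-1) * (1/Real.cos x ^ 2) := by
      intro k hk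
      obtain ⟨hk1, _⟩ := Finset.mem_Icc.mp hk
      have hkne : (k:ℝ) ≠ 0 := Nat.cast_ne_zero.mpr (by omega)
      field_simp
    rw [Finset.sum_congr rfl hsimp, show Finset.Icc 1 (n+1) = Finset.Ico 1 (n+2) from
      (Finset.Ico_add_one_right_eq_Icc 1 (n+1)).symm, Finset.sum_Ico_eq_sum_range]
    simp only [Nat.add_sub_cancel, Nat.add_sub_cancel_left]
    rw [Finset.mul_sum]
    exact Finset.sum_congr rfl fun i _ => by ring
  -- Step D : pointwise identity
  have hptwise : ∀ x ∈ s, (1 / Real.cos x ^ 2) * ∑ j ∈ Finset.range (n+1), Real.tan x ^ j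
      = (1 / Real.cos (2*x) + Real.tan (2*x) - Real.tan x)
        - Real.tan x ^ (n+1) * (1 / Real.cos (2*x) + Real.tan (2*x) - Real.tan x) := by
    intro x hx
    have hk := keyid (hcos x hx) (hcos2 x hx)
    have hg := geom_sum_mul (Real.tan x) (n+1)
    linear_combination (-(∑ j ∈ Finset.range (n+1), Real.tan x ^ j)) * hk
      - (1 / Real.cos (2*x) + Real.tan (2*x) - Real.tan x) * hg
  have hev : deriv G =ᶠ[nhds (0:ℝ)] fun t =>
      (1 / Real.cos (2*t) + Real.tan (2*t) - Real.tan t)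
      - Real.tan t ^ (n+1) * (1 / Real.cos (2*t) + Real.tan (2*t) - Real.tan t) := by
    filter_upwards [hso.mem_nhds h0] with x hx
    rw [hderivG x hx, hptwise x hx]
  rw [iteratedDeriv_succ', hev.iteratedDeriv_eq n]
  rw [iter_sub hso h0 n hF ((htan.pow (n+1)).mul hF)]
  -- vanishing of the remainder
  have hvan : iteratedDeriv n (fun t => Real.tan t ^ (n+1)
      * (1 / Real.cos (2*t) + Real.tan (2*t) - Real.tan t)) 0 = 0 := by
    rw [show (fun t => Real.tan t ^ (n+1) * (1 / Real.cos (2*t) + Real.tan (2*t) - Real.tan t))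
      = fun t => (1 / Real.cos (2*t) + Real.tan (2*t) - Real.tan t) * Real.tan t ^ (n+1)
      from funext fun t => mul_comm _ _]
    exact vanish_mul hso h0 n _ _ hF (htan.pow (n+1)) (vanish_tan_pow hso h0 htan n) n le_rfl
  rw [hvan, sub_zero]
  -- split F
  rw [iter_sub hso h0 n (hsec2.add htan2) htan, iter_add hso h0 n hsec2 htan2]
  -- scaling
  have hA : iteratedDeriv n (fun t : ℝ => 1 / Real.cos (2*t)) 0 = 2^n * secantNumber n := by
    have := iter_comp_two huo hu0 n (fun t => 1 / Real.cos t) hsecu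
    simpa [secantNumber] using this
  have hBt : iteratedDeriv n (fun t : ℝ => Real.tan (2*t)) 0 = 2^n * tangentNumber n := by
    have := iter_comp_two huo hu0 n Real.tan htanu
    simpa [tangentNumber] using this
  rw [hA, hBt, show iteratedDeriv n Real.tan 0 = tangentNumber n from rfl]
  by_cases hodd : Odd n
  · rw [if_pos hodd]
    have hs0 : secantNumber n = 0 :=
      odd_deriv_even (fun t => 1 / Real.cos t) (fun x => by simp) hodd
    rw [hs0]
    ring
  · rw [if_neg hodd]
    have heven : Even n := Nat.not_odd_iff_even.mp hodd
    have ht0 : tangentNumber n = 0 :=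
      even_deriv_odd Real.tan (fun x => Real.tan_neg x) heven
    rw [ht0]
    ring
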